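/- Let β and γ be nonzero rational numbers whose classes in ℚ^×/(ℚ^×)² are independent, i.e., none of β, γ, and βγ is a square in ℚ. Then there exist infinitely many primes p such that neither β nor γ is a square in ℚ_p. (This is the claim, used in the proof of Lemma 5.12, that there is a positive-density set of places inert in both ℚ(√β) and ℚ(√γ).) -/

import Mathlib

open scoped NumberTheorySymbols

lemma jac_congr (b : ℤ) {M m n : ℕ} (hM : 4 * b.natAbs ∣ M) (hm : Odd m) (hn : Odd n)
    (h : m % M = n % M) : J(b | m) = J(b | n) := by
  rw [jacobiSym.mod_right b hm, jacobiSym.mod_right b hn,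
    ← Nat.mod_mod_of_dvd m hM, ← Nat.mod_mod_of_dvd n hM, h]

lemma padic_not_isSquare {p : ℕ} [Fact p.Prime] {b : ℤ}
    (h : ¬ IsSquare ((b : ℤ) : ZMod p)) : ¬ IsSquare ((b : ℚ_[p])) := by
  rintro ⟨y, hy⟩
  have hynorm : ‖y‖ ≤ 1 := by
    by_contra hlt
    push_neg at hlt
    have h1 : ‖(b : ℚ_[p])‖ ≤ 1 := Padic.norm_int_le_one b
    rw [hy, norm_mul] at h1
    nlinarith
  set Y : ℤ_[p] := ⟨y, hynorm⟩ with hY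
  have hbY : (b : ℤ_[p]) = Y * Y := by
    apply Subtype.coe_injective
    push_cast
    exact hy
  apply h
  refine ⟨PadicInt.toZMod Y, ?_⟩
  have := congrArg (PadicInt.toZMod (p := p)) hbY
  rw [map_mul, map_intCast] at this
  exact this

lemma isSquare_mul_sq_iff {F : Type*} [Field F] (x r : F) (hr : r ≠ 0) :
    IsSquare (x * r ^ 2) → IsSquare x := by
  rintro ⟨y, hy⟩
  refine ⟨y / r, ?_⟩
  field_simp
  rw [hy]; ring

lemma coprime_of_modeq_one {n M : ℕ} (h : n ≡ 1 [MOD M]) : n.Coprime M := by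
  have h1 : Nat.gcd M n = Nat.gcd M 1 := by rw [Nat.gcd_rec M n, Nat.gcd_rec M 1, h]
  have := h1.trans (Nat.gcd_one_right M)
  rwa [Nat.Coprime, Nat.gcd_comm]


lemma exists_squarefree_part (β : ℚ) (hβ : β ≠ 0) :
    ∃ (b : ℤ) (r : ℚ), Squarefree b ∧ r ≠ 0 ∧ β = (b : ℚ) * r ^ 2 := by
  have hN0 : β.num * (β.den : ℤ) ≠ 0 :=
    mul_ne_zero (Rat.num_ne_zero.mpr hβ) (by exact_mod_cast β.den_ne_zero)
  obtain ⟨b₀, s, hbs, hsf⟩ := Nat.sq_mul_squarefree (β.num * (β.den : ℤ)).natAbs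
  have hNA : (β.num * (β.den : ℤ)).natAbs ≠ 0 := Int.natAbs_ne_zero.mpr hN0
  have hb₀0 : b₀ ≠ 0 := by
    intro h; rw [h, mul_zero] at hbs; exact hNA hbs.symm
  have hs0 : s ≠ 0 := by
    intro h; rw [h] at hbs; simp at hbs; exact hNA hbs.symm
  have hden : (β.den : ℚ) ≠ 0 := by exact_mod_cast β.den_ne_zero
  refine ⟨(β.num * (β.den : ℤ)).sign * b₀, (s : ℚ) / (β.den : ℚ), ?_, ?_, ?_⟩
  · rw [← Int.squarefree_natAbs, Int.natAbs_mul,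
      Int.natAbs_sign_of_ne_zero hN0, one_mul, Int.natAbs_natCast]
    exact hsf
  · positivity
  · have key : ((β.num * (β.den : ℤ)).sign * (b₀ : ℤ)) * (s : ℤ) ^ 2 = β.num * β.den := by
      rw [mul_assoc, mul_comm (b₀ : ℤ), ← Int.natCast_pow, ← Int.natCast_mul, hbs,
        Int.sign_mul_natAbs]
    have key2 : (((β.num * (β.den : ℤ)).sign * (b₀ : ℤ)) : ℚ) * (s : ℚ) ^ 2
        = (β.num : ℚ) * (β.den : ℚ) := by exact_mod_cast congrArg (fun z : ℤ => (z : ℚ)) key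
    rw [div_pow, mul_div_assoc', eq_div_iff (by positivity)]
    push_cast at key2 ⊢
    rw [key2]
    have hbd : (β.num : ℚ) = β * (β.den : ℚ) := (div_eq_iff hden).mp (Rat.num_div_den β)
    rw [pow_two, ← mul_assoc, ← hbd]


lemma jac_unit_one {d : ℤ} (hd : d = 1 ∨ d = -1 ∨ d = 2 ∨ d = -2) {n : ℕ} (hn : n % 8 = 1) :
    J(d | n) = 1 := by
  have hodd : Odd n := Nat.odd_iff.mpr (by omega)
  have h2 : n % 2 = 1 := by omega
  have h4 : n % 4 = 1 := by omega
  rcases hd with h | h | h | h <;> subst h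
  · exact jacobiSym.one_left n
  · rw [jacobiSym.at_neg_one hodd, ZMod.χ₄_nat_eq_if_mod_four]; simp [h2, h4]
  · rw [jacobiSym.at_two hodd, ZMod.χ₈_nat_eq_if_mod_eight]; simp [h2, hn]
  · rw [jacobiSym.at_neg_two hodd, ZMod.χ₈'_nat_eq_if_mod_eight]; simp [h2, hn]

lemma exists_jac {b : ℤ} (hb0 : b ≠ 0) (hsf : Squarefree b) (hsq : ¬ IsSquare b)
    {T : ℕ} (hT : Odd T) (hbT : ordCompl[2] b.natAbs ∣ T) :
    ∃ n : ℕ, Odd n ∧ n.Coprime (8 * T) ∧ J(b | n) = -1 := by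
  have hT0 : T ≠ 0 := by rintro rfl; simp [Nat.odd_iff] at hT
  have hbA0 : b.natAbs ≠ 0 := Int.natAbs_ne_zero.mpr hb0
  have hsfA : Squarefree b.natAbs := Int.squarefree_natAbs.mpr hsf
  set m : ℕ := ordCompl[2] b.natAbs with hmdef
  have hm0 : m ≠ 0 := (Nat.ordCompl_pos 2 hbA0).ne'
  have hmdvd : m ∣ b.natAbs := Nat.ordCompl_dvd b.natAbs 2
  have hm2 : ¬ (2 ∣ m) := Nat.not_dvd_ordCompl Nat.prime_two hbA0
  have hmodd : Odd m := Nat.odd_iff.mpr (by omega)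
  set k : ℕ := b.natAbs.factorization 2 with hkdef
  have hk : 2 ^ k * m = b.natAbs := Nat.ordProj_mul_ordCompl_eq_self b.natAbs 2
  have hk1 : k ≤ 1 := hsfA.natFactorization_le_one 2
  have hmdvd' : (m : ℤ) ∣ b :=
    dvd_trans (Int.natCast_dvd_natCast.mpr hmdvd) (Int.natAbs_dvd.mpr dvd_rfl)
  set d : ℤ := b / (m : ℤ) with hddef
  have hbd : b = d * (m : ℤ) := (Int.ediv_mul_cancel hmdvd').symm
  have hdabs : d.natAbs = 2 ^ k := by
    have h1 : d.natAbs * m = 2 ^ k * m := by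
      have h2 := congrArg Int.natAbs hbd
      rw [Int.natAbs_mul, Int.natAbs_natCast] at h2
      omega
    exact Nat.eq_of_mul_eq_mul_right (Nat.pos_of_ne_zero hm0) h1
  have hd4 : d = 1 ∨ d = -1 ∨ d = 2 ∨ d = -2 := by
    have h1 : d.natAbs = 1 ∨ d.natAbs = 2 := by
      have : k = 0 ∨ k = 1 := by omega
      rcases this with h | h <;> rw [h] at hdabs <;> simp [hdabs] <;> omega
    omega
  by_cases hm1 : m = 1
  · -- b ∈ {-1, 2, -2}
    have hbd1 : b = d := by rw [hbd, hm1]; simp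
    have hb4 : b = -1 ∨ b = 2 ∨ b = -2 := by
      rcases hd4 with h | h | h | h
      · exact absurd (by rw [hbd1, h]; exact IsSquare.one) hsq
      all_goals rw [hbd1, h]; tauto
    set r : ℕ := if b = -2 then 5 else 3 with hrdef
    have hrval : r = 3 ∨ r = 5 := by rw [hrdef]; split_ifs <;> simp
    have hco8T : Nat.Coprime 8 T := by
      have : Nat.Coprime (2 ^ 3) T := Nat.Coprime.pow_left 3 (Nat.coprime_two_left.mpr hT)
      simpa using this
    obtain ⟨n, hn8', hnT⟩ := Nat.chineseRemainder hco8T r 1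
    have hn8 : n % 8 = r := by
      have h1 : n % 8 = r % 8 := hn8'
      rcases hrval with h | h <;> omega
    have hoddn : Odd n := Nat.odd_iff.mpr (by rcases hrval with h | h <;> omega)
    refine ⟨n, hoddn, ?_, ?_⟩
    · have c8 : n.Coprime 8 := by
        have : n.Coprime (2 ^ 3) := Nat.Coprime.pow_right 3 (Nat.coprime_two_right.mpr hoddn)
        simpa using this
      exact c8.mul_right (coprime_of_modeq_one hnT)
    · rcases hb4 with h | h | h <;> subst h <;> simp only [hrdef] at hn8 <;>
        [skip; skip; skip]
      · rw [jacobiSym.at_neg_one hoddn, ZMod.χ₄_nat_eq_if_mod_four]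
        have : n % 8 = 3 := by simpa using hn8
        have h2 : n % 2 = 1 := by omega
        have h4 : n % 4 = 3 := by omega
        simp [h2, h4]
      · rw [jacobiSym.at_two hoddn, ZMod.χ₈_nat_eq_if_mod_eight]
        have h8 : n % 8 = 3 := by simpa using hn8
        have h2 : n % 2 = 1 := by omega
        simp [h2, h8]
      · rw [jacobiSym.at_neg_two hoddn, ZMod.χ₈'_nat_eq_if_mod_eight]
        have h8 : n % 8 = 5 := by simpa using hn8
        have h2 : n % 2 = 1 := by omega
        simp [h2, h8]
  · -- m has an odd prime factor q
    set q : ℕ := m.minFac with hqdef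
    have hq : q.Prime := Nat.minFac_prime hm1
    haveI : Fact q.Prime := ⟨hq⟩
    have hqdvdm : q ∣ m := Nat.minFac_dvd m
    have hq2 : q ≠ 2 := by intro h; exact hm2 (h ▸ hqdvdm)
    set m' : ℕ := m / q with hm'def
    have hm'eq : m = q * m' := (Nat.mul_div_cancel' hqdvdm).symm
    have hm'0 : m' ≠ 0 := by intro h; rw [h, mul_zero] at hm'eq; exact hm0 hm'eq
    have hsfm : Squarefree m := hsfA.squarefree_of_dvd hmdvd
    have hqm' : ¬ q ∣ m' := by
      intro h
      have : q * q ∣ m := by rw [hm'eq]; exact mul_dvd_mul_left q h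
      exact hq.one_lt.ne' (Nat.isUnit_iff.mp (hsfm q this))
    have hqT : q ∣ T := hqdvdm.trans hbT
    set L : ℕ := ordCompl[q] T with hLdef
    set α : ℕ := T.factorization q with hαdef
    have hLT : q ^ α * L = T := Nat.ordProj_mul_ordCompl_eq_self T q
    have hqL : ¬ q ∣ L := Nat.not_dvd_ordCompl hq hT0
    have hm'L : m' ∣ L := by
      have h1 : m' ∣ T := dvd_trans ⟨q, by rw [hm'eq]; ring⟩ (hbT)
      rw [← hLT] at h1
      have cop : Nat.Coprime m' (q ^ α) :=
        Nat.Coprime.pow_right α (Nat.coprime_comm.mp ((hq.coprime_iff_not_dvd).mpr hqm'))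
      exact (Nat.Coprime.dvd_of_dvd_mul_left cop h1)
    obtain ⟨x, hx⟩ := FiniteField.exists_nonsquare
      (F := ZMod q) (by rw [ZMod.ringChar_zmod_n]; exact hq2)
    have hx0 : x ≠ 0 := fun h => hx (h ▸ (by exact ⟨0, by simp⟩ : IsSquare (0 : ZMod q)))
    set s : ℕ := x.val with hsdef
    have hsx : ((s : ℕ) : ZMod q) = x := by rw [hsdef, ZMod.natCast_val, ZMod.cast_id]
    have hco : Nat.Coprime (8 * L) q := by
      have hnd : ¬ q ∣ 8 * L := by
        intro h
        rcases (Nat.Prime.dvd_mul hq).mp h with h8 | hL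
        · exact hq2 (Nat.prime_dvd_prime_iff_eq hq Nat.prime_two |>.mp
            (hq.dvd_of_dvd_pow (show q ∣ 2 ^ 3 by norm_num [h8])))
        · exact hqL hL
      exact Nat.coprime_comm.mp ((hq.coprime_iff_not_dvd).mpr hnd)
    obtain ⟨n, hn8L, hnq⟩ := Nat.chineseRemainder hco 1 s
    have hn8 : n % 8 = 1 := by
      have h1 : n ≡ 1 [MOD 8] := (hn8L).of_dvd (dvd_mul_right 8 L)
      have h2 : n % 8 = 1 % 8 := h1
      omega
    have hoddn : Odd n := Nat.odd_iff.mpr (by omega)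
    have hnL : n ≡ 1 [MOD L] := (hn8L).of_dvd (dvd_mul_left L 8)
    have hnm' : n ≡ 1 [MOD m'] := hnL.of_dvd hm'L
    have hqn : ¬ q ∣ n := by
      intro h
      have h0 : (n : ZMod q) = 0 := (ZMod.natCast_eq_zero_iff n q).mpr h
      rw [(ZMod.natCast_eq_natCast_iff n s q).mpr hnq, hsx] at h0
      exact hx0 h0
    refine ⟨n, hoddn, ?_, ?_⟩
    · have c8 : n.Coprime 8 := by
        have : n.Coprime (2 ^ 3) := Nat.Coprime.pow_right 3 (Nat.coprime_two_right.mpr hoddn)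
        simpa using this
      have cq : n.Coprime q := Nat.coprime_comm.mp ((hq.coprime_iff_not_dvd).mpr hqn)
      have cL : n.Coprime L := coprime_of_modeq_one hnL
      have : n.Coprime (8 * (q ^ α * L)) := c8.mul_right ((cq.pow_right α).mul_right cL)
      rwa [hLT] at this
    · haveI : NeZero q := ⟨hq.pos.ne'⟩
      haveI : NeZero m' := ⟨hm'0⟩
      have hJd : J(d | n) = 1 := jac_unit_one hd4 hn8
      have hrecip : J((m : ℤ) | n) = J((n : ℤ) | m) :=
        jacobiSym.quadratic_reciprocity_one_mod_four' hmodd (by omega)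
      have hJm' : J((n : ℤ) | m') = 1 := by
        have hc : ((n : ℤ)) % (m' : ℤ) = ((1 : ℤ)) % (m' : ℤ) := by
          exact_mod_cast congrArg (fun t : ℕ => (t : ℤ)) hnm'
        rw [jacobiSym.mod_left' hc, jacobiSym.one_left]
      have hJq : J((n : ℤ) | q) = -1 := by
        have hc : ((n : ℤ)) % (q : ℤ) = ((s : ℤ)) % (q : ℤ) := by
          exact_mod_cast congrArg (fun t : ℕ => (t : ℤ)) hnq
        rw [jacobiSym.mod_left' hc]
        have hns : ¬ IsSquare (((s : ℤ)) : ZMod q) := by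
          intro hsq'
          apply hx
          rwa [show (((s : ℤ)) : ZMod q) = x from by push_cast; exact hsx] at hsq'
        exact ZMod.nonsquare_iff_jacobiSym_eq_neg_one.mpr hns
      calc J(b | n) = J(d | n) * J((m : ℤ) | n) := by rw [hbd, jacobiSym.mul_left]
        _ = J((n : ℤ) | q) * J((n : ℤ) | m') := by
            rw [hJd, hrecip, one_mul, hm'eq]
            push_cast
            rw [jacobiSym.mul_right]
        _ = -1 := by rw [hJq, hJm']; ring

lemma four_natAbs_dvd {z : ℤ} (hz0 : z ≠ 0) (hzsf : Squarefree z) {T : ℕ}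
    (h : ordCompl[2] z.natAbs ∣ T) : 4 * z.natAbs ∣ 8 * T := by
  have hzA0 : z.natAbs ≠ 0 := Int.natAbs_ne_zero.mpr hz0
  have hk : 2 ^ (z.natAbs.factorization 2) * ordCompl[2] z.natAbs = z.natAbs :=
    Nat.ordProj_mul_ordCompl_eq_self z.natAbs 2
  have hk1 : z.natAbs.factorization 2 ≤ 1 :=
    (Int.squarefree_natAbs.mpr hzsf).natFactorization_le_one 2
  set m := z.natAbs / 2 ^ z.natAbs.factorization 2 with hmdef
  obtain ⟨t, ht⟩ := h
  rcases (show z.natAbs.factorization 2 = 0 ∨ z.natAbs.factorization 2 = 1 by omega) with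
    h0 | h0
  · have hm : m = z.natAbs := by rw [h0, pow_zero, one_mul] at hk; exact hk
    exact ⟨2 * t, by rw [ht, hm]; ring⟩
  · have hm : 2 * m = z.natAbs := by rw [h0, pow_one] at hk; exact hk
    exact ⟨t, by rw [ht, ← hm]; ring⟩

/-- If β, γ ∈ ℚ^× are such that none of β, γ, βγ is a square in ℚ (i.e. their
classes in ℚ^×/(ℚ^×)² are independent), then there are infinitely many primes p
such that neither β nor γ is a square in ℚ_p. -/
theorem stmt_12 (β γ : ℚ) (hβ : β ≠ 0) (hγ : γ ≠ 0)
    (h1 : ¬ IsSquare β) (h2 : ¬ IsSquare γ) (h3 : ¬ IsSquare (β * γ)) :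
    {p : ℕ | ∃ hp : p.Prime,
      haveI : Fact p.Prime := ⟨hp⟩
      ¬ IsSquare (β : ℚ_[p]) ∧ ¬ IsSquare (γ : ℚ_[p])}.Infinite := by
  obtain ⟨b, r, hbsf, hr0, hβr⟩ := exists_squarefree_part β hβ
  obtain ⟨c, u, hcsf, hu0, hγu⟩ := exists_squarefree_part γ hγ
  have hb0 : b ≠ 0 := hbsf.ne_zero
  have hc0 : c ≠ 0 := hcsf.ne_zero
  have hbsq : ¬ IsSquare b := by
    rintro ⟨t, ht⟩
    exact h1 ⟨(t : ℚ) * r, by rw [hβr, ht]; push_cast; ring⟩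
  have hcsq : ¬ IsSquare c := by
    rintro ⟨t, ht⟩
    exact h2 ⟨(t : ℚ) * u, by rw [hγu, ht]; push_cast; ring⟩
  set T : ℕ := ordCompl[2] (b * c).natAbs with hTdef
  have hbc0 : (b * c).natAbs ≠ 0 := Int.natAbs_ne_zero.mpr (mul_ne_zero hb0 hc0)
  have hT2 : ¬ (2 ∣ T) := Nat.not_dvd_ordCompl Nat.prime_two hbc0
  have hTodd : Odd T := Nat.odd_iff.mpr (by omega)
  have hbcd : b.natAbs ∣ (b * c).natAbs := by rw [Int.natAbs_mul]; exact dvd_mul_right _ _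
  have hccd : c.natAbs ∣ (b * c).natAbs := by rw [Int.natAbs_mul]; exact dvd_mul_left _ _
  have hbT : ordCompl[2] b.natAbs ∣ T := Nat.ordCompl_dvd_ordCompl_of_dvd hbcd 2
  have hcT : ordCompl[2] c.natAbs ∣ T := Nat.ordCompl_dvd_ordCompl_of_dvd hccd 2
  obtain ⟨nb, hnbo, hnbc, hnbJ⟩ := exists_jac hb0 hbsf hbsq hTodd hbT
  obtain ⟨nc, hnco, hncc, hncJ⟩ := exists_jac hc0 hcsf hcsq hTodd hcT
  have gcd_one : ∀ (z : ℤ) (n : ℕ), Squarefree z → z ≠ 0 → ordCompl[2] z.natAbs ∣ T →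
      Odd n → n.Coprime (8 * T) → Int.gcd z n = 1 := by
    intro z n hzsf hz0 hzT hno hnc
    have hk : 2 ^ (z.natAbs.factorization 2) * ordCompl[2] z.natAbs = z.natAbs :=
      Nat.ordProj_mul_ordCompl_eq_self z.natAbs 2
    have c2 : n.Coprime (2 ^ (z.natAbs.factorization 2)) :=
      Nat.Coprime.pow_right _ (Nat.coprime_two_right.mpr hno)
    have cT : n.Coprime T := Nat.Coprime.coprime_dvd_right (dvd_mul_left T 8) hnc
    have cm : n.Coprime (ordCompl[2] z.natAbs) := Nat.Coprime.coprime_dvd_right hzT cT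
    have : n.Coprime z.natAbs := by rw [← hk]; exact c2.mul_right cm
    have h' : Nat.gcd z.natAbs n = 1 := Nat.coprime_comm.mp this
    simpa [Int.gcd] using h'
  obtain ⟨a, haodd, hacop, haJb, haJc⟩ :
      ∃ a : ℕ, Odd a ∧ a.Coprime (8 * T) ∧ J(b | a) = -1 ∧ J(c | a) = -1 := by
    have hJcb := jacobiSym.eq_one_or_neg_one (gcd_one c nb hcsf hc0 hcT hnbo hnbc)
    have hJbc := jacobiSym.eq_one_or_neg_one (gcd_one b nc hbsf hb0 hbT hnco hncc)
    rcases hJcb with h | h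
    · rcases hJbc with h' | h'
      · haveI : NeZero nb := ⟨hnbo.pos.ne'⟩
        haveI : NeZero nc := ⟨hnco.pos.ne'⟩
        refine ⟨nb * nc, Nat.odd_mul.mpr ⟨hnbo, hnco⟩, Nat.Coprime.mul hnbc hncc, ?_, ?_⟩
        · rw [jacobiSym.mul_right, hnbJ, h']; ring
        · rw [jacobiSym.mul_right, h, hncJ]; ring
      · exact ⟨nc, hnco, hncc, h', hncJ⟩
    · exact ⟨nb, hnbo, hnbc, hnbJ, h⟩
  haveI : NeZero (8 * T) := ⟨by have := Nat.odd_iff.mp hTodd; omega⟩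
  have haunit : IsUnit ((a : ℕ) : ZMod (8 * T)) := (ZMod.isUnit_iff_coprime a (8 * T)).mpr hacop
  apply (Nat.infinite_setOfPred_prime_and_eq_mod haunit).mono
  rintro p ⟨hp, hpa⟩
  have hmod : p % (8 * T) = a % (8 * T) := (ZMod.natCast_eq_natCast_iff p a (8 * T)).mp hpa
  have hmodeq : p ≡ a [MOD 8 * T] := hmod
  have hpodd : Odd p := by
    have := Nat.ModEq.of_dvd (⟨4 * T, by ring⟩ : (2 : ℕ) ∣ 8 * T) hmodeq
    have h2 : p % 2 = a % 2 := this
    have := Nat.odd_iff.mp haodd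
    exact Nat.odd_iff.mpr (by omega)
  haveI : Fact p.Prime := ⟨hp⟩
  have hJbp : J(b | p) = -1 :=
    (jac_congr b (four_natAbs_dvd hb0 hbsf hbT) hpodd haodd hmod).trans haJb
  have hJcp : J(c | p) = -1 :=
    (jac_congr c (four_natAbs_dvd hc0 hcsf hcT) hpodd haodd hmod).trans haJc
  have hbZ : ¬ IsSquare ((b : ℤ) : ZMod p) := ZMod.nonsquare_of_jacobiSym_eq_neg_one hJbp
  have hcZ : ¬ IsSquare ((c : ℤ) : ZMod p) := ZMod.nonsquare_of_jacobiSym_eq_neg_one hJcp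
  have hbp := padic_not_isSquare hbZ
  have hcp := padic_not_isSquare hcZ
  refine ⟨hp, ?_, ?_⟩
  · intro hs
    apply hbp
    apply isSquare_mul_sq_iff _ ((r : ℚ_[p])) (by exact_mod_cast hr0)
    have hβp : (β : ℚ_[p]) = ((b : ℤ) : ℚ_[p]) * ((r : ℚ_[p])) ^ 2 := by
      rw [hβr]; push_cast; ring
    rwa [← hβp]
  · intro hs
    apply hcp
    apply isSquare_mul_sq_iff _ ((u : ℚ_[p])) (by exact_mod_cast hu0)
    have hγp : (γ : ℚ_[p]) = ((c : ℤ) : ℚ_[p]) * ((u : ℚ_[p])) ^ 2 := by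
      rw [hγu]; push_cast; ring
    rwa [← hγp]
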